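/- arXiv:1510.06827 — 9 statements merged into one kernel-verified Lean document; each statement's English description precedes it below -/
import Mathlib

section
/- Let E_u > 0, τ > 0, γ > 0, α ∈ (0,1], K ≥ 1 an integer, β_1,…,β_K > 0 real, and k ∈ {1,…,K}. For each integer M ≥ 2 set p(M) = E_u / M^γ and define R̃^{a,mrc}(M) = log₂(1 + α² τ p(M)² (M−1) β_k² / (p(M)(1 + τ p(M) β_k)·Σ_{i≠k} β_i + (τ+1) p(M) β_k + 1 + (1−α²) τ p(M)² β_k²)). Then R̃^{a,mrc}(M) − log₂(1 + α² τ E_u² β_k² · M^{1−2γ}) → 0 as M → ∞. -/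
/- STATEMENT 1: asymptotic tightness of the MRC aged-CSI lower bound under the
power scaling p_u = E_u / M^γ. -/
theorem stmt_1 (Eu τ γ α : ℝ) (hE : 0 < Eu) (hτ : 0 < τ) (hγ : 0 < γ)
    (hα0 : 0 < α) (hα1 : α ≤ 1) (K : ℕ) (hK : 1 ≤ K)
    (β : Fin K → ℝ) (hβ : ∀ i, 0 < β i) (k : Fin K) :
    Filter.Tendsto (fun M : ℕ =>
      Real.logb 2 (1 + α ^ 2 * τ * (Eu / (M : ℝ) ^ γ) ^ 2 * ((M : ℝ) - 1) * (β k) ^ 2 /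
          ((Eu / (M : ℝ) ^ γ) * (1 + τ * (Eu / (M : ℝ) ^ γ) * β k) *
              (∑ i ∈ Finset.univ.erase k, β i) +
            (τ + 1) * (Eu / (M : ℝ) ^ γ) * β k + 1 +
            (1 - α ^ 2) * τ * (Eu / (M : ℝ) ^ γ) ^ 2 * (β k) ^ 2)) -
        Real.logb 2 (1 + α ^ 2 * τ * Eu ^ 2 * (β k) ^ 2 * (M : ℝ) ^ (1 - 2 * γ)))
      Filter.atTop (nhds 0) := by
  have hβk := hβ k
  set S : ℝ := ∑ i ∈ Finset.univ.erase k, β i with hSdef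
  have hS0 : 0 ≤ S := Finset.sum_nonneg fun i _ => (hβ i).le
  set p : ℕ → ℝ := fun M => Eu / (M : ℝ) ^ γ with hpdef
  set A : ℕ → ℝ := fun M => α ^ 2 * τ * (p M) ^ 2 * ((M : ℝ) - 1) * (β k) ^ 2 with hAdef
  set D : ℕ → ℝ := fun M =>
    p M * (1 + τ * p M * β k) * S + (τ + 1) * p M * β k + 1 +
      (1 - α ^ 2) * τ * (p M) ^ 2 * (β k) ^ 2 with hDdef
  set B : ℕ → ℝ := fun M => α ^ 2 * τ * Eu ^ 2 * (β k) ^ 2 * (M : ℝ) ^ (1 - 2 * γ) with hBdef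
  have hα2 : (0:ℝ) ≤ 1 - α ^ 2 := by nlinarith
  have hMpos : ∀ M : ℕ, 1 ≤ M → (0:ℝ) < (M : ℝ) := by
    intro M hM; exact_mod_cast Nat.lt_of_lt_of_le Nat.zero_lt_one hM
  have hppos : ∀ M : ℕ, 1 ≤ M → 0 < p M := by
    intro M hM
    exact div_pos hE (Real.rpow_pos_of_pos (hMpos M hM) γ)
  have hD1 : ∀ M : ℕ, 1 ≤ M → 1 ≤ D M := by
    intro M hM
    have hp := (hppos M hM).le
    have h1 : 0 ≤ p M * (1 + τ * p M * β k) * S := by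
      apply mul_nonneg (mul_nonneg hp _) hS0
      nlinarith [mul_nonneg (mul_nonneg hτ.le hp) hβk.le]
    have h2 : 0 ≤ (τ + 1) * p M * β k := by positivity
    have h3 : 0 ≤ (1 - α ^ 2) * τ * (p M) ^ 2 * (β k) ^ 2 := by positivity
    simp only [hDdef]; linarith
  have hA0 : ∀ M : ℕ, 1 ≤ M → 0 ≤ A M := by
    intro M hM
    have : (0:ℝ) ≤ (M : ℝ) - 1 := by
      have : (1:ℝ) ≤ (M:ℝ) := by exact_mod_cast hM
      linarith
    have hp := (hppos M hM).le
    simp only [hAdef]; positivity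
  have hBpos : ∀ M : ℕ, 1 ≤ M → 0 < B M := by
    intro M hM
    have := Real.rpow_pos_of_pos (hMpos M hM) (1 - 2 * γ)
    simp only [hBdef]; positivity
  -- key identity : A M = B M * ((M-1)/M)
  have hAB : ∀ M : ℕ, 1 ≤ M → A M = B M * (((M : ℝ) - 1) / (M : ℝ)) := by
    intro M hM
    have hMr := hMpos M hM
    have hMγ : (0:ℝ) < (M : ℝ) ^ γ := Real.rpow_pos_of_pos hMr γ
    have h1 : (M : ℝ) ^ (1 - 2 * γ) = (M : ℝ) / ((M : ℝ) ^ γ) ^ 2 := by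
      rw [Real.rpow_sub hMr, Real.rpow_one, ← Real.rpow_natCast ((M:ℝ) ^ γ) 2,
        ← Real.rpow_mul hMr.le]
      norm_num [mul_comm]
    simp only [hAdef, hBdef, hpdef, h1, div_pow]
    field_simp
  -- limit of p
  have hplim : Filter.Tendsto p Filter.atTop (nhds 0) := by
    have hpow : Filter.Tendsto (fun M : ℕ => (M : ℝ) ^ γ) Filter.atTop Filter.atTop :=
      (tendsto_rpow_atTop hγ).comp tendsto_natCast_atTop_atTop
    have := hpow.inv_tendsto_atTop.const_mul Eu
    simpa [hpdef, div_eq_mul_inv] using this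
  -- limit of D
  have hDlim : Filter.Tendsto D Filter.atTop (nhds 1) := by
    have hF : Continuous (fun x : ℝ =>
        x * (1 + τ * x * β k) * S + (τ + 1) * x * β k + 1 +
          (1 - α ^ 2) * τ * x ^ 2 * (β k) ^ 2) := by fun_prop
    have := (hF.tendsto 0).comp hplim
    simp only [Function.comp_def] at this
    norm_num at this
    convert this using 2 <;> simp [hDdef] <;> ring
  -- lower bound function tends to 1
  have hlow : Filter.Tendsto (fun M : ℕ => (1 - 1 / (M : ℝ)) / D M) Filter.atTop (nhds 1) := by
    have h1 : Filter.Tendsto (fun M : ℕ => 1 - 1 / (M : ℝ)) Filter.atTop (nhds 1) := by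
      have : Filter.Tendsto (fun n : ℕ => 1 / (n : ℝ)) Filter.atTop (nhds 0) :=
        tendsto_one_div_atTop_nhds_zero_nat
      simpa using tendsto_const_nhds.sub this
    simpa only [div_one, Pi.div_def] using h1.div hDlim one_ne_zero
  -- ratio tends to 1
  have hratio : Filter.Tendsto (fun M : ℕ => (1 + A M / D M) / (1 + B M))
      Filter.atTop (nhds 1) := by
    apply tendsto_of_tendsto_of_tendsto_of_le_of_le' hlow tendsto_const_nhds
    · filter_upwards [Filter.eventually_atTop.2 ⟨1, fun M hM => hM⟩] with M hM
      clear_value S p A D B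
      have hDpos : 0 < D M := lt_of_lt_of_le one_pos (hD1 M hM)
      have hB := hBpos M hM
      have hA := hA0 M hM
      rw [div_le_div_iff₀ hDpos (by linarith : (0:ℝ) < 1 + B M)]
      have hM1 : (1:ℝ) ≤ (M:ℝ) := by exact_mod_cast hM
      have hABle : (1 - 1/(M:ℝ)) * B M ≤ A M := by
        rw [hAB M hM]
        have : (1 - 1/(M:ℝ)) = ((M:ℝ) - 1) / (M:ℝ) := by
          field_simp
        rw [this, mul_comm]
      have hAD : A M ≤ (1 + A M / D M) * D M := by
        have : (1 + A M / D M) * D M = D M + A M := by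
          field_simp
        rw [this]; linarith [hD1 M hM]
      have h1M : 1 - 1/(M:ℝ) ≤ 1 := by
        have : (0:ℝ) < 1/(M:ℝ) := by positivity
        linarith
      calc (1 - 1/(M:ℝ)) * (1 + B M) = (1 - 1/(M:ℝ)) + (1 - 1/(M:ℝ)) * B M := by ring
        _ ≤ D M + A M := by
            have h := hD1 M hM
            nlinarith
        _ = (1 + A M / D M) * D M := by field_simp
    · filter_upwards [Filter.eventually_atTop.2 ⟨1, fun M hM => hM⟩] with M hM
      clear_value S p A D B
      have hDpos : 0 < D M := lt_of_lt_of_le one_pos (hD1 M hM)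
      have hB := hBpos M hM
      have hA := hA0 M hM
      rw [div_le_one (by linarith : (0:ℝ) < 1 + B M)]
      have hM1 : (1:ℝ) ≤ (M:ℝ) := by exact_mod_cast hM
      have hABle : A M ≤ B M := by
        rw [hAB M hM]
        have h1 : ((M:ℝ) - 1) / (M:ℝ) ≤ 1 := by
          rw [div_le_one (hMpos M hM)]; linarith
        nlinarith
      have : A M / D M ≤ A M := by
        rw [div_le_iff₀ hDpos]
        nlinarith [hD1 M hM]
      linarith
  -- log of ratio tends to 0
  have hlog : Filter.Tendsto (fun M : ℕ => Real.logb 2 ((1 + A M / D M) / (1 + B M)))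
      Filter.atTop (nhds 0) := by
    have := ((Real.continuousAt_log one_ne_zero).tendsto.comp hratio).div_const (Real.log 2)
    simp only [Function.comp, Real.log_one, zero_div] at this
    simpa [Real.logb] using this
  refine hlog.congr' ?_
  filter_upwards [Filter.eventually_atTop.2 ⟨1, fun M hM => hM⟩] with M hM
  have hDpos : 0 < D M := lt_of_lt_of_le one_pos (hD1 M hM)
  have hB := hBpos M hM
  have hA := hA0 M hM
  have hx : (0:ℝ) < 1 + A M / D M := by positivity
  have hy : (0:ℝ) < 1 + B M := by linarith
  rw [Real.logb_div hx.ne' hy.ne']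
end

section
/- Let E_u > 0, τ > 0, γ > 0, α ∈ (0,1], K ≥ 1 an integer, β_1,…,β_K > 0 real, and k ∈ {1,…,K}. For each integer M > K set p(M) = E_u / M^γ and define R̃^{a,zf}(M) = log₂(1 + α² τ p(M)² (M−K) β_k² / ((1 + τ p(M) β_k)·Σ_{i=1}^K p(M)β_i/(τ p(M)β_i + 1) + τ p(M) β_k + 1 + (1−α²)(1 + τ p(M)β_k)·Σ_{i=1}^K τ p(M)² β_i²/(1 + τ p(M)β_i))). Then R̃^{a,zf}(M) − log₂(1 + α² τ E_u² β_k² · M^{1−2γ}) → 0 as M → ∞. -/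
open Filter Real

/- STATEMENT 2: asymptotic tightness of the ZF aged-CSI lower bound under the
power scaling p_u = E_u / M^γ. -/
theorem stmt_2 (Eu τ γ α : ℝ) (hE : 0 < Eu) (hτ : 0 < τ) (hγ : 0 < γ)
    (hα0 : 0 < α) (hα1 : α ≤ 1) (K : ℕ) (hK : 1 ≤ K)
    (β : Fin K → ℝ) (hβ : ∀ i, 0 < β i) (k : Fin K) :
    Filter.Tendsto (fun M : ℕ =>
      Real.logb 2 (1 + α ^ 2 * τ * (Eu / (M : ℝ) ^ γ) ^ 2 * ((M : ℝ) - K) * (β k) ^ 2 /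
          ((1 + τ * (Eu / (M : ℝ) ^ γ) * β k) *
              (∑ i, (Eu / (M : ℝ) ^ γ) * β i / (τ * (Eu / (M : ℝ) ^ γ) * β i + 1)) +
            τ * (Eu / (M : ℝ) ^ γ) * β k + 1 +
            (1 - α ^ 2) * (1 + τ * (Eu / (M : ℝ) ^ γ) * β k) *
              (∑ i, τ * (Eu / (M : ℝ) ^ γ) ^ 2 * (β i) ^ 2 / (1 + τ * (Eu / (M : ℝ) ^ γ) * β i)))) -
        Real.logb 2 (1 + α ^ 2 * τ * Eu ^ 2 * (β k) ^ 2 * (M : ℝ) ^ (1 - 2 * γ)))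
      Filter.atTop (nhds 0) := by
  have h1α : 0 ≤ 1 - α ^ 2 := by nlinarith
  have hβk := hβ k
  -- the power sequence tends to 0
  have hMpow : Tendsto (fun M : ℕ => (M : ℝ) ^ γ) atTop atTop :=
    (tendsto_rpow_atTop hγ).comp tendsto_natCast_atTop_atTop
  have hp0 : Tendsto (fun M : ℕ => Eu / (M : ℝ) ^ γ) atTop (nhds 0) :=
    tendsto_const_nhds.div_atTop hMpow
  have hτβ : ∀ j : Fin K, Tendsto (fun M : ℕ => τ * (Eu / (M : ℝ) ^ γ) * β j)
      atTop (nhds 0) := by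
    intro j
    simpa using (hp0.const_mul τ).mul_const (β j)
  -- the two sums tend to 0
  have hS1 : Tendsto (fun M : ℕ =>
      ∑ i, (Eu / (M : ℝ) ^ γ) * β i / (τ * (Eu / (M : ℝ) ^ γ) * β i + 1))
      atTop (nhds 0) := by
    have h : Tendsto (fun M : ℕ =>
        ∑ i : Fin K, (Eu / (M : ℝ) ^ γ) * β i / (τ * (Eu / (M : ℝ) ^ γ) * β i + 1))
        atTop (nhds (∑ _i : Fin K, (0 : ℝ))) := by
      refine tendsto_finset_sum _ fun i _ => ?_
      have hnum : Tendsto (fun M : ℕ => (Eu / (M : ℝ) ^ γ) * β i) atTop (nhds 0) := by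
        simpa using hp0.mul_const (β i)
      have hden : Tendsto (fun M : ℕ => τ * (Eu / (M : ℝ) ^ γ) * β i + 1)
          atTop (nhds 1) := by
        simpa using (hτβ i).add (tendsto_const_nhds : Tendsto (fun _ : ℕ => (1:ℝ)) atTop _)
      simpa [Pi.div_def] using hnum.div hden one_ne_zero
    simpa using h
  have hS2 : Tendsto (fun M : ℕ =>
      ∑ i, τ * (Eu / (M : ℝ) ^ γ) ^ 2 * (β i) ^ 2 / (1 + τ * (Eu / (M : ℝ) ^ γ) * β i))
      atTop (nhds 0) := by
    have h : Tendsto (fun M : ℕ =>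
        ∑ i : Fin K, τ * (Eu / (M : ℝ) ^ γ) ^ 2 * (β i) ^ 2 /
          (1 + τ * (Eu / (M : ℝ) ^ γ) * β i))
        atTop (nhds (∑ _i : Fin K, (0 : ℝ))) := by
      refine tendsto_finset_sum _ fun i _ => ?_
      have hnum : Tendsto (fun M : ℕ => τ * (Eu / (M : ℝ) ^ γ) ^ 2 * (β i) ^ 2)
          atTop (nhds 0) := by
        have := ((hp0.mul hp0).const_mul τ).mul_const ((β i) ^ 2)
        simpa [pow_two, mul_assoc] using this
      have hden : Tendsto (fun M : ℕ => 1 + τ * (Eu / (M : ℝ) ^ γ) * β i)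
          atTop (nhds 1) := by
        simpa using (tendsto_const_nhds : Tendsto (fun _ : ℕ => (1:ℝ)) atTop _).add (hτβ i)
      simpa [Pi.div_def] using hnum.div hden one_ne_zero
    simpa using h
  -- the denominator tends to 1
  have hD1 : Tendsto (fun M : ℕ =>
      (1 + τ * (Eu / (M : ℝ) ^ γ) * β k) *
          (∑ i, (Eu / (M : ℝ) ^ γ) * β i / (τ * (Eu / (M : ℝ) ^ γ) * β i + 1)) +
        τ * (Eu / (M : ℝ) ^ γ) * β k + 1 +
        (1 - α ^ 2) * (1 + τ * (Eu / (M : ℝ) ^ γ) * β k) *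
          (∑ i, τ * (Eu / (M : ℝ) ^ γ) ^ 2 * (β i) ^ 2 / (1 + τ * (Eu / (M : ℝ) ^ γ) * β i)))
      atTop (nhds 1) := by
    have hone : Tendsto (fun _ : ℕ => (1:ℝ)) atTop (nhds 1) := tendsto_const_nhds
    have h := (((((hone.add (hτβ k)).mul hS1).add (hτβ k)).add hone).add
      (((tendsto_const_nhds (x := (1 - α ^ 2 : ℝ))).mul (hone.add (hτβ k))).mul hS2))
    have hval : ((1 + 0) * 0 + 0 + 1 + (1 - α ^ 2) * (1 + 0) * 0 : ℝ) = 1 := by ring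
    simpa [hval, mul_assoc] using h
  -- q M → 1
  set q : ℕ → ℝ := fun M =>
    (1 - (K : ℝ) / M) /
      ((1 + τ * (Eu / (M : ℝ) ^ γ) * β k) *
          (∑ i, (Eu / (M : ℝ) ^ γ) * β i / (τ * (Eu / (M : ℝ) ^ γ) * β i + 1)) +
        τ * (Eu / (M : ℝ) ^ γ) * β k + 1 +
        (1 - α ^ 2) * (1 + τ * (Eu / (M : ℝ) ^ γ) * β k) *
          (∑ i, τ * (Eu / (M : ℝ) ^ γ) ^ 2 * (β i) ^ 2 / (1 + τ * (Eu / (M : ℝ) ^ γ) * β i)))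
    with hqdef
  have hq : Tendsto q atTop (nhds 1) := by
    rw [hqdef]
    have hKM : Tendsto (fun M : ℕ => (K : ℝ) / M) atTop (nhds 0) :=
      tendsto_const_div_atTop_nhds_zero_nat _
    have := ((tendsto_const_nhds : Tendsto (fun _ : ℕ => (1:ℝ)) atTop _).sub hKM).div hD1
      one_ne_zero
    simpa [Pi.div_def] using this
  set A := α ^ 2 * τ * Eu ^ 2 * β k ^ 2 with hA
  have hApos : 0 < A := by rw [hA]; positivity
  -- the ratio sequence
  set r : ℕ → ℝ := fun M =>
    (1 + A * (M : ℝ) ^ (1 - 2 * γ) * q M) / (1 + A * (M : ℝ) ^ (1 - 2 * γ)) with hrdef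
  have hsnn : ∀ M : ℕ, 0 ≤ (M : ℝ) ^ (1 - 2 * γ) := fun M =>
    Real.rpow_nonneg (Nat.cast_nonneg M) _
  have hr1 : Tendsto r atTop (nhds 1) := by
    have hbound : ∀ M : ℕ, ‖r M - 1‖ ≤ |q M - 1| := by
      intro M
      have hs0 : 0 ≤ A * (M : ℝ) ^ (1 - 2 * γ) := mul_nonneg hApos.le (hsnn M)
      have hden : (0:ℝ) < 1 + A * (M : ℝ) ^ (1 - 2 * γ) := by linarith
      have heq : r M - 1 =
          (A * (M : ℝ) ^ (1 - 2 * γ) / (1 + A * (M : ℝ) ^ (1 - 2 * γ))) * (q M - 1) := by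
        rw [hrdef]
        field_simp
        ring
      rw [Real.norm_eq_abs, heq, abs_mul]
      have h1 : |A * (M : ℝ) ^ (1 - 2 * γ) / (1 + A * (M : ℝ) ^ (1 - 2 * γ))| ≤ 1 := by
        rw [abs_of_nonneg (div_nonneg hs0 hden.le), div_le_one hden]
        linarith
      calc |A * (M : ℝ) ^ (1 - 2 * γ) / (1 + A * (M : ℝ) ^ (1 - 2 * γ))| * |q M - 1|
          ≤ 1 * |q M - 1| := mul_le_mul_of_nonneg_right h1 (abs_nonneg _)
        _ = |q M - 1| := one_mul _
    have habs : Tendsto (fun M : ℕ => |q M - 1|) atTop (nhds 0) := by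
      have := (hq.sub_const 1).abs
      simpa using this
    have h0 : Tendsto (fun M : ℕ => r M - 1) atTop (nhds 0) :=
      squeeze_zero_norm hbound habs
    have := h0.add (tendsto_const_nhds : Tendsto (fun _ : ℕ => (1:ℝ)) atTop _)
    simpa using this
  -- log of the ratio tends to 0
  have hlog : Tendsto (fun M : ℕ => Real.logb 2 (r M)) atTop (nhds 0) := by
    have h := ((Real.continuousAt_log one_ne_zero).tendsto.comp hr1).div_const (Real.log 2)
    simpa [Real.logb, Function.comp] using h
  refine Filter.Tendsto.congr' ?_ hlog
  filter_upwards [Filter.eventually_gt_atTop K] with M hM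
  have hMK : (K : ℝ) < M := by exact_mod_cast hM
  have hMpos : (0:ℝ) < M := by
    have : 0 < M := lt_of_le_of_lt (Nat.zero_le K) hM
    exact_mod_cast this
  have hpow : (0:ℝ) < (M : ℝ) ^ γ := Real.rpow_pos_of_pos hMpos γ
  have hP : 0 < Eu / (M : ℝ) ^ γ := div_pos hE hpow
  -- positivity of the denominator D M
  have hS1nn : 0 ≤ ∑ i, (Eu / (M : ℝ) ^ γ) * β i / (τ * (Eu / (M : ℝ) ^ γ) * β i + 1) := by
    refine Finset.sum_nonneg fun i _ => ?_
    have := hβ i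
    positivity
  have hS2nn : 0 ≤ ∑ i, τ * (Eu / (M : ℝ) ^ γ) ^ 2 * (β i) ^ 2 /
      (1 + τ * (Eu / (M : ℝ) ^ γ) * β i) := by
    refine Finset.sum_nonneg fun i _ => ?_
    have := hβ i
    positivity
  have hfac : (0:ℝ) < 1 + τ * (Eu / (M : ℝ) ^ γ) * β k := by positivity
  have hDpos : (0:ℝ) <
      (1 + τ * (Eu / (M : ℝ) ^ γ) * β k) *
          (∑ i, (Eu / (M : ℝ) ^ γ) * β i / (τ * (Eu / (M : ℝ) ^ γ) * β i + 1)) +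
        τ * (Eu / (M : ℝ) ^ γ) * β k + 1 +
        (1 - α ^ 2) * (1 + τ * (Eu / (M : ℝ) ^ γ) * β k) *
          (∑ i, τ * (Eu / (M : ℝ) ^ γ) ^ 2 * (β i) ^ 2 /
            (1 + τ * (Eu / (M : ℝ) ^ γ) * β i)) := by
    have h1 : 0 ≤ (1 + τ * (Eu / (M : ℝ) ^ γ) * β k) *
        (∑ i, (Eu / (M : ℝ) ^ γ) * β i / (τ * (Eu / (M : ℝ) ^ γ) * β i + 1)) :=
      mul_nonneg hfac.le hS1nn
    have h2 : 0 ≤ (1 - α ^ 2) * (1 + τ * (Eu / (M : ℝ) ^ γ) * β k) *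
        (∑ i, τ * (Eu / (M : ℝ) ^ γ) ^ 2 * (β i) ^ 2 /
          (1 + τ * (Eu / (M : ℝ) ^ γ) * β i)) :=
      mul_nonneg (mul_nonneg h1α hfac.le) hS2nn
    have h3 : 0 ≤ τ * (Eu / (M : ℝ) ^ γ) * β k := by positivity
    linarith
  -- the key algebraic identity
  have hnK : (0:ℝ) ≤ (M : ℝ) - K := by linarith
  have hpow2 : (M : ℝ) ^ γ * (M : ℝ) ^ γ = (M : ℝ) ^ (2 * γ) := by
    rw [← Real.rpow_add hMpos]; ring_nf
  have hsplit : (M : ℝ) ^ (1 - 2 * γ) = (M : ℝ) / ((M : ℝ) ^ γ * (M : ℝ) ^ γ) := by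
    rw [hpow2, Real.rpow_sub hMpos, Real.rpow_one]
  have hY : ((1:ℝ) + A * (M : ℝ) ^ (1 - 2 * γ)) ≠ 0 := by
    have hs0 : 0 ≤ A * (M : ℝ) ^ (1 - 2 * γ) := mul_nonneg hApos.le (hsnn M)
    positivity
  simp only [hrdef, hqdef]
  set DM : ℝ :=
    (1 + τ * (Eu / (M : ℝ) ^ γ) * β k) *
        (∑ i, (Eu / (M : ℝ) ^ γ) * β i / (τ * (Eu / (M : ℝ) ^ γ) * β i + 1)) +
      τ * (Eu / (M : ℝ) ^ γ) * β k + 1 +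
      (1 - α ^ 2) * (1 + τ * (Eu / (M : ℝ) ^ γ) * β k) *
        (∑ i, τ * (Eu / (M : ℝ) ^ γ) ^ 2 * (β i) ^ 2 /
          (1 + τ * (Eu / (M : ℝ) ^ γ) * β i)) with hDM
  have hxeq : α ^ 2 * τ * (Eu / (M : ℝ) ^ γ) ^ 2 * ((M : ℝ) - K) * (β k) ^ 2 / DM
      = A * (M : ℝ) ^ (1 - 2 * γ) * ((1 - (K : ℝ) / M) / DM) := by
    rw [hA, hsplit]
    field_simp
  have hxnn : (0:ℝ) ≤
      α ^ 2 * τ * (Eu / (M : ℝ) ^ γ) ^ 2 * ((M : ℝ) - K) * (β k) ^ 2 / DM := by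
    refine div_nonneg ?_ hDpos.le
    have h1 : 0 ≤ α ^ 2 * τ * (Eu / (M : ℝ) ^ γ) ^ 2 := by positivity
    exact mul_nonneg (mul_nonneg h1 hnK) (sq_nonneg _)
  have hX : ((1:ℝ) + α ^ 2 * τ * (Eu / (M : ℝ) ^ γ) ^ 2 * ((M : ℝ) - K) * (β k) ^ 2 / DM)
      ≠ 0 := by
    have : (0:ℝ) < 1 + α ^ 2 * τ * (Eu / (M : ℝ) ^ γ) ^ 2 * ((M : ℝ) - K) * (β k) ^ 2 / DM := by
      linarith
    exact this.ne'
  have h1 : ((1:ℝ) + A * (M : ℝ) ^ (1 - 2 * γ) * ((1 - (K : ℝ) / M) / DM)) ≠ 0 := by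
    rw [← hxeq]; exact hX
  rw [Real.logb_div h1 hY, ← hxeq]
end

section
/- Let E_u > 0, τ > 0, α ∈ (0,1], K ≥ 1 an integer, β_1,…,β_K > 0 real, and k ∈ {1,…,K}. For each integer M ≥ 2 set p(M) = E_u / √M and define R̃^{a,mrc}(M) = log₂(1 + α² τ p(M)² (M−1) β_k² / (p(M)(1 + τ p(M) β_k)·Σ_{i≠k} β_i + (τ+1) p(M) β_k + 1 + (1−α²) τ p(M)² β_k²)). Then R̃^{a,mrc}(M) → log₂(1 + α² τ E_u² β_k²) as M → ∞. -/
/- STATEMENT 3 (Corollary 1): with p_u = E_u/√M, the MRC aged-CSI lower bound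
converges to log₂(1 + α² τ E_u² β_k²). -/
theorem stmt_3 (Eu τ α : ℝ) (hE : 0 < Eu) (hτ : 0 < τ)
    (hα0 : 0 < α) (hα1 : α ≤ 1) (K : ℕ) (hK : 1 ≤ K)
    (β : Fin K → ℝ) (hβ : ∀ i, 0 < β i) (k : Fin K) :
    Filter.Tendsto (fun M : ℕ =>
      Real.logb 2 (1 + α ^ 2 * τ * (Eu / Real.sqrt M) ^ 2 * ((M : ℝ) - 1) * (β k) ^ 2 /
        ((Eu / Real.sqrt M) * (1 + τ * (Eu / Real.sqrt M) * β k) *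
            (∑ i ∈ Finset.univ.erase k, β i) +
          (τ + 1) * (Eu / Real.sqrt M) * β k + 1 +
          (1 - α ^ 2) * τ * (Eu / Real.sqrt M) ^ 2 * (β k) ^ 2)))
      Filter.atTop (nhds (Real.logb 2 (1 + α ^ 2 * τ * Eu ^ 2 * (β k) ^ 2))) := by
  open Filter in
  have hsqrt : Tendsto Real.sqrt atTop atTop := by
    apply tendsto_atTop_atTop_of_monotone (fun a b h => Real.sqrt_le_sqrt h)
    intro b
    exact ⟨b ^ 2, by rw [Real.sqrt_sq_eq_abs]; exact le_abs_self b⟩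
  have hs : Tendsto (fun M : ℕ => Real.sqrt M) atTop atTop :=
    hsqrt.comp tendsto_natCast_atTop_atTop
  have hx : Tendsto (fun M : ℕ => Eu / Real.sqrt M) atTop (nhds 0) :=
    tendsto_const_nhds.div_atTop hs
  have hx2 : Tendsto (fun M : ℕ => (Eu / Real.sqrt M) ^ 2) atTop (nhds 0) := by
    simpa using hx.pow 2
  have hy : Tendsto (fun M : ℕ => (Eu / Real.sqrt M) ^ 2 * ((M : ℝ) - 1)) atTop
      (nhds (Eu ^ 2)) := by
    have h1 : Tendsto (fun M : ℕ => Eu ^ 2 * (1 - 1 / (M : ℝ))) atTop (nhds (Eu ^ 2)) := by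
      have h2 := (tendsto_const_nhds (α := ℕ) (x := (1 : ℝ))).sub
        tendsto_one_div_atTop_nhds_zero_nat
      simpa using (tendsto_const_nhds (α := ℕ) (x := Eu ^ 2)).mul h2
    apply h1.congr'
    filter_upwards [eventually_ge_atTop 1] with M hM
    have hM0 : (0 : ℝ) < (M : ℝ) := by exact_mod_cast Nat.lt_of_lt_of_le Nat.zero_lt_one hM
    rw [div_pow, Real.sq_sqrt hM0.le]
    field_simp
  have hnum : Tendsto (fun M : ℕ =>
      α ^ 2 * τ * (Eu / Real.sqrt M) ^ 2 * ((M : ℝ) - 1) * (β k) ^ 2) atTop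
      (nhds (α ^ 2 * τ * Eu ^ 2 * (β k) ^ 2)) :=
    ((hy.const_mul (α ^ 2 * τ)).mul_const ((β k) ^ 2)).congr (fun M => by ring)
  have hden : Tendsto (fun M : ℕ =>
      (Eu / Real.sqrt M) * (1 + τ * (Eu / Real.sqrt M) * β k) *
          (∑ i ∈ Finset.univ.erase k, β i) +
        (τ + 1) * (Eu / Real.sqrt M) * β k + 1 +
        (1 - α ^ 2) * τ * (Eu / Real.sqrt M) ^ 2 * (β k) ^ 2) atTop (nhds 1) := by
    have hF : Continuous (fun x : ℝ =>
        x * (1 + τ * x * β k) * (∑ i ∈ Finset.univ.erase k, β i) +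
          (τ + 1) * x * β k + 1 + (1 - α ^ 2) * τ * x ^ 2 * (β k) ^ 2) := by continuity
    have h := (hF.tendsto 0).comp hx
    simpa [Function.comp_def] using h
  have harg : Tendsto (fun M : ℕ =>
      1 + α ^ 2 * τ * (Eu / Real.sqrt M) ^ 2 * ((M : ℝ) - 1) * (β k) ^ 2 /
        ((Eu / Real.sqrt M) * (1 + τ * (Eu / Real.sqrt M) * β k) *
            (∑ i ∈ Finset.univ.erase k, β i) +
          (τ + 1) * (Eu / Real.sqrt M) * β k + 1 +
          (1 - α ^ 2) * τ * (Eu / Real.sqrt M) ^ 2 * (β k) ^ 2)) atTop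
      (nhds (1 + α ^ 2 * τ * Eu ^ 2 * (β k) ^ 2)) := by
    have := hnum.div hden one_ne_zero
    simpa using (tendsto_const_nhds (α := ℕ) (x := (1 : ℝ))).add this
  have hpos : (0 : ℝ) < 1 + α ^ 2 * τ * Eu ^ 2 * (β k) ^ 2 := by positivity
  exact (Real.continuousAt_logb (ne_of_gt hpos)).tendsto.comp harg
end

section
/- Let p ∈ ℕ, α ∈ (0,1], τ > 0, E_u > 0, K ≥ 1 an integer, β_1,…,β_K > 0 real, and k ∈ {1,…,K}. Let Δ(p,α) be the (p+1)×(p+1) real matrix with entries α^{|i−j|} (indices 0,…,p) and δ(p,α) = (1, α, …, α^p) ∈ ℝ^{p+1}. For each integer M ≥ 2 set p_u(M) = E_u/√M and, for i ∈ {1,…,K}, c_i(M) = α² β_i² · δ(p,α) (β_i Δ(p,α) + (√M/(τ E_u)) I_{p+1})^{−1} δ(p,α)ᵀ, and define R̃^{p,mrc}(M) = log₂(1 + p_u(M)(M−1) c_k(M) / (p_u(M) Σ_{i≠k} c_i(M) + p_u(M) Σ_{i=1}^K (β_i − c_i(M)) + 1)). Then R̃^{p,mrc}(M) → log₂(1 +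 α² (Σ_{j=0}^p α^{2j}) τ E_u² β_k²) as M → ∞. -/
open Matrix Filter
set_option maxHeartbeats 1000000
noncomputable def Dmat (p : ℕ) (α : ℝ) : Matrix (Fin (p+1)) (Fin (p+1)) ℝ :=
  Matrix.of fun a b : Fin (p+1) => α ^ ((a : ℤ) - (b : ℤ)).natAbs

noncomputable def dvec (p : ℕ) (α : ℝ) : Fin (p+1) → ℝ := fun j => α ^ (j : ℕ)

noncomputable def hmat (p : ℕ) (α b e : ℝ) : Matrix (Fin (p+1)) (Fin (p+1)) ℝ :=
  (1 : Matrix (Fin (p+1)) (Fin (p+1)) ℝ) + e • (b • Dmat p α)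

noncomputable def gfun (p : ℕ) (α b e : ℝ) : ℝ :=
  dvec p α ⬝ᵥ ((hmat p α b e)⁻¹ *ᵥ dvec p α)

lemma hmat_zero (p : ℕ) (α b : ℝ) : hmat p α b 0 = 1 := by
  simp [hmat]

lemma gfun_contAt (p : ℕ) (α b : ℝ) : ContinuousAt (gfun p α b) 0 := by
  have hc : Continuous (fun e : ℝ => hmat p α b e) :=
    continuous_const.add (continuous_id.smul continuous_const)
  have hinv : ContinuousAt (Inv.inv : Matrix (Fin (p+1)) (Fin (p+1)) ℝ → _) (hmat p α b 0) := by
    apply continuousAt_matrix_inv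
    rw [Ring.inverse_eq_inv']
    rw [hmat_zero, Matrix.det_one]
    exact continuousAt_inv₀ one_ne_zero
  have h2 : ContinuousAt (fun e : ℝ => (hmat p α b e)⁻¹) 0 := hinv.comp hc.continuousAt
  have hF : Continuous (fun A : Matrix (Fin (p+1)) (Fin (p+1)) ℝ => dvec p α ⬝ᵥ (A *ᵥ dvec p α)) :=
    continuous_const.dotProduct (continuous_id.matrix_mulVec continuous_const)
  exact hF.continuousAt.comp h2

lemma gfun_zero (p : ℕ) (α b : ℝ) :
    gfun p α b 0 = ∑ j ∈ Finset.range (p+1), α ^ (2*j) := by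
  have h1 : ((1 : Matrix (Fin (p+1)) (Fin (p+1)) ℝ))⁻¹ = 1 := by
    rw [Matrix.inv_def]; simp [Matrix.adjugate_one]
  simp [gfun, hmat_zero, h1, Matrix.one_mulVec, dvec, dotProduct]
  rw [Fin.sum_univ_eq_sum_range (fun j => α ^ j * α ^ j)]
  exact Finset.sum_congr rfl fun j _ => by rw [two_mul, pow_add]

lemma key_rw (p : ℕ) (α b s : ℝ) (hs : s ≠ 0)
    (hdet : (hmat p α b s⁻¹).det ≠ 0) :
    dvec p α ⬝ᵥ ((b • Dmat p α + s • (1 : Matrix (Fin (p+1)) (Fin (p+1)) ℝ))⁻¹ *ᵥ dvec p α)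
      = s⁻¹ * gfun p α b s⁻¹ := by
  have hA : b • Dmat p α + s • (1 : Matrix (Fin (p+1)) (Fin (p+1)) ℝ)
      = s • hmat p α b s⁻¹ := by
    rw [hmat, smul_add, smul_smul, mul_inv_cancel₀ hs, one_smul]
    exact add_comm _ _
  haveI : Invertible s := invertibleOfNonzero hs
  have h2 := Matrix.inv_smul (A := hmat p α b s⁻¹) s hdet.isUnit
  rw [hA, h2, invOf_eq_inv, Matrix.smul_mulVec,
    dotProduct_smul, smul_eq_mul, gfun]

lemma sqrt_tendsto_atTop : Filter.Tendsto Real.sqrt Filter.atTop Filter.atTop :=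
  Filter.tendsto_atTop_atTop_of_monotone (fun _ _ h => Real.sqrt_le_sqrt h)
    (fun b => ⟨b ^ 2, by rw [Real.sqrt_sq_eq_abs]; exact le_abs_self b⟩)

theorem stmt_7 (p : ℕ) (α τ Eu : ℝ) (hα0 : 0 < α) (hα1 : α ≤ 1)
    (hτ : 0 < τ) (hE : 0 < Eu) (K : ℕ) (hK : 1 ≤ K)
    (β : Fin K → ℝ) (hβ : ∀ i, 0 < β i) (k : Fin K) :
    Filter.Tendsto (fun M : ℕ =>
      let pu : ℝ := Eu / Real.sqrt M
      let c : Fin K → ℝ := fun i => α ^ 2 * (β i) ^ 2 *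
        ((fun j : Fin (p + 1) => α ^ (j : ℕ)) ⬝ᵥ
          ((β i • (Matrix.of fun a b : Fin (p + 1) => α ^ ((a : ℤ) - (b : ℤ)).natAbs) +
              (Real.sqrt M / (τ * Eu)) • (1 : Matrix (Fin (p + 1)) (Fin (p + 1)) ℝ))⁻¹ *ᵥ
            (fun j : Fin (p + 1) => α ^ (j : ℕ))))
      Real.logb 2 (1 + pu * ((M : ℝ) - 1) * c k /
        (pu * (∑ i ∈ Finset.univ.erase k, c i) + pu * (∑ i, (β i - c i)) + 1)))
      Filter.atTop
      (nhds (Real.logb 2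
        (1 + α ^ 2 * (∑ j ∈ Finset.range (p + 1), α ^ (2 * j)) * τ * Eu ^ 2 * (β k) ^ 2))) := by
  have hτE : 0 < τ * Eu := mul_pos hτ hE
  set S : ℝ := ∑ j ∈ Finset.range (p + 1), α ^ (2 * j) with hSdef
  have hSpos : 0 < S := Finset.sum_pos (fun j _ => pow_pos hα0 _)
    (Finset.nonempty_range_iff.mpr (Nat.succ_ne_zero p))
  set ε : ℕ → ℝ := fun M => (Real.sqrt M / (τ * Eu))⁻¹ with hεdef
  -- ε → 0
  have hεlim : Tendsto ε atTop (nhds 0) :=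
    tendsto_inv_atTop_zero.comp
      ((sqrt_tendsto_atTop.comp tendsto_natCast_atTop_atTop).atTop_div_const hτE)
  -- gfun limits
  have hg : ∀ b : ℝ, Tendsto (fun M : ℕ => gfun p α b (ε M)) atTop (nhds S) := by
    intro b
    have := (gfun_contAt p α b).tendsto.comp hεlim
    rwa [gfun_zero] at this
  -- eventually determinant nonzero
  have hdet : ∀ i : Fin K, ∀ᶠ M : ℕ in atTop, (hmat p α (β i) (ε M)).det ≠ 0 := by
    intro i
    have hc : Continuous (fun e : ℝ => (hmat p α (β i) e).det) :=
      (continuous_const.add (continuous_id.smul continuous_const)).matrix_det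
    have h2 : Tendsto (fun M : ℕ => (hmat p α (β i) (ε M)).det) atTop
        (nhds ((hmat p α (β i) 0).det)) := hc.continuousAt.tendsto.comp hεlim
    rw [hmat_zero, Matrix.det_one] at h2
    exact h2.eventually_ne one_ne_zero
  -- auxiliary limits
  have hpu : Tendsto (fun M : ℕ => Eu / Real.sqrt M) atTop (nhds 0) :=
    Tendsto.div_atTop tendsto_const_nhds (sqrt_tendsto_atTop.comp tendsto_natCast_atTop_atTop)
  set c' : Fin K → ℕ → ℝ := fun i M => α ^ 2 * (β i) ^ 2 * (ε M * gfun p α (β i) (ε M))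
    with hc'def
  have hci : ∀ i : Fin K, Tendsto (c' i) atTop (nhds 0) := by
    intro i
    have := (hεlim.mul (hg (β i))).const_mul (α ^ 2 * (β i) ^ 2)
    simpa using this
  have hratio : Tendsto (fun M : ℕ => ((M : ℝ) - 1) / M) atTop (nhds 1) := by
    have h0 : Tendsto (fun M : ℕ => ((M : ℝ))⁻¹) atTop (nhds 0) :=
      tendsto_inv_atTop_zero.comp tendsto_natCast_atTop_atTop
    have h1 : Tendsto (fun M : ℕ => 1 - ((M : ℝ))⁻¹) atTop (nhds (1 - 0)) :=
      (tendsto_const_nhds : Tendsto (fun _ : ℕ => (1 : ℝ)) atTop (nhds 1)).sub h0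
    rw [sub_zero] at h1
    refine Tendsto.congr' ?_ h1
    filter_upwards [eventually_ge_atTop 1] with M hM
    have hM0 : (M : ℝ) ≠ 0 := Nat.cast_ne_zero.mpr (by omega)
    field_simp
  have hnum : Tendsto (fun M : ℕ =>
      τ * Eu ^ 2 * α ^ 2 * (β k) ^ 2 * (((M : ℝ) - 1) / M) * gfun p α (β k) (ε M)) atTop
      (nhds (τ * Eu ^ 2 * α ^ 2 * (β k) ^ 2 * S)) := by
    have := (hratio.const_mul (τ * Eu ^ 2 * α ^ 2 * (β k) ^ 2)).mul (hg (β k))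
    simpa using this
  have hden : Tendsto (fun M : ℕ =>
      (Eu / Real.sqrt M) * (∑ i ∈ Finset.univ.erase k, c' i M) +
        (Eu / Real.sqrt M) * (∑ i, (β i - c' i M)) + 1) atTop (nhds 1) := by
    have t1 : Tendsto (fun M : ℕ => (Eu / Real.sqrt M) * (∑ i ∈ Finset.univ.erase k, c' i M))
        atTop (nhds 0) := by
      have := hpu.mul (tendsto_finset_sum (Finset.univ.erase k) (fun i _ => hci i))
      simpa using this
    have t2 : Tendsto (fun M : ℕ => (Eu / Real.sqrt M) * (∑ i, (β i - c' i M)))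
        atTop (nhds 0) := by
      have hb : Tendsto (fun M : ℕ => ∑ i, (β i - c' i M)) atTop (nhds (∑ i, (β i - 0))) :=
        tendsto_finset_sum Finset.univ (fun i _ =>
          (tendsto_const_nhds : Tendsto (fun _ : ℕ => β i) atTop (nhds (β i))).sub (hci i))
      have := hpu.mul hb
      simpa using this
    have := (t1.add t2).add
      (tendsto_const_nhds : Tendsto (fun _ : ℕ => (1 : ℝ)) atTop (nhds 1))
    simpa using this
  set L : ℝ := τ * Eu ^ 2 * α ^ 2 * (β k) ^ 2 * S with hLdef
  have hLpos : 0 < L :=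
    mul_pos (mul_pos (mul_pos (mul_pos hτ (pow_pos hE 2)) (pow_pos hα0 2))
      (pow_pos (hβ k) 2)) hSpos
  have hq : Tendsto (fun M : ℕ =>
      (τ * Eu ^ 2 * α ^ 2 * (β k) ^ 2 * (((M : ℝ) - 1) / M) * gfun p α (β k) (ε M)) /
      ((Eu / Real.sqrt M) * (∑ i ∈ Finset.univ.erase k, c' i M) +
        (Eu / Real.sqrt M) * (∑ i, (β i - c' i M)) + 1)) atTop (nhds L) := by
    have := hnum.div hden one_ne_zero
    rw [div_one] at this; exact this
  have hcont : ContinuousAt (fun x : ℝ => Real.logb 2 (1 + x)) L := by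
    have h1 : ContinuousAt (fun x : ℝ => Real.log (1 + x) / Real.log 2) L :=
      ((Real.continuousAt_log (by show (1:ℝ) + L ≠ 0; exact ne_of_gt (by linarith))).comp
        (continuousAt_const.add continuousAt_id)).div_const _
    simpa [Real.logb] using h1
  have hmain := hcont.tendsto.comp hq
  have htarget : Real.logb 2 (1 + L) =
      Real.logb 2 (1 + α ^ 2 * S * τ * Eu ^ 2 * (β k) ^ 2) := by rw [hLdef]; ring_nf
  rw [htarget] at hmain
  refine Tendsto.congr' ?_ hmain
  filter_upwards [eventually_ge_atTop 1, Filter.eventually_all.2 hdet] with M hM1 hdetM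
  have hMpos : (0 : ℝ) < (M : ℝ) := by exact_mod_cast Nat.pos_of_ne_zero (by omega)
  have hr : Real.sqrt M ≠ 0 := ne_of_gt (Real.sqrt_pos.mpr hMpos)
  have hrr : Real.sqrt M * Real.sqrt M = (M : ℝ) := Real.mul_self_sqrt (le_of_lt hMpos)
  have hs : Real.sqrt M / (τ * Eu) ≠ 0 := div_ne_zero hr (ne_of_gt hτE)
  simp only [Function.comp_apply]
  have hC : ∀ i : Fin K,
      α ^ 2 * (β i) ^ 2 *
        ((fun j : Fin (p + 1) => α ^ (j : ℕ)) ⬝ᵥ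
          ((β i • (Matrix.of fun a b : Fin (p + 1) => α ^ ((a : ℤ) - (b : ℤ)).natAbs) +
              (Real.sqrt M / (τ * Eu)) • (1 : Matrix (Fin (p + 1)) (Fin (p + 1)) ℝ))⁻¹ *ᵥ
            (fun j : Fin (p + 1) => α ^ (j : ℕ)))) = c' i M := by
    intro i
    have := key_rw p α (β i) (Real.sqrt M / (τ * Eu)) hs (hdetM i)
    rw [hc'def]
    exact congrArg (fun x => α ^ 2 * (β i) ^ 2 * x) this
  have hεM : ε M = τ * Eu / Real.sqrt M := by
    show (Real.sqrt M / (τ * Eu))⁻¹ = _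
    rw [inv_div]
  simp only [hC]
  congr 1
  congr 1
  congr 1
  · simp only [hc'def, hεM]
    set r := Real.sqrt M with hrdef
    rw [show ((M : ℝ)) = r * r from hrr.symm]
    field_simp
end

section
/- Let p ∈ ℕ, α ∈ (0,1], τ > 0, E_u > 0, K ≥ 1 an integer, β_1,…,β_K > 0 real, and k ∈ {1,…,K}. Let Δ(p,α) be the (p+1)×(p+1) real matrix with entries α^{|i−j|} (indices 0,…,p) and δ(p,α) = (1, α, …, α^p) ∈ ℝ^{p+1}. For each integer M > K set p_u(M) = E_u/√M and, for i ∈ {1,…,K}, c_i(M) = α² β_i² · δ(p,α) (β_i Δ(p,α) + (√M/(τ E_u)) I_{p+1})^{−1} δ(p,α)ᵀ, and define R̃^{p,zf}(M) = log₂(1 + p_u(M)(M−K) c_k(M) / (p_u(M) Σ_{i=1}^K (β_i − c_i(M)) + 1)). Then R̃^{p,zf}(M) → log₂(1 + α² (Σ_{j=0}^p α^{2j}) τ E_u² β_k²) as M → ∞. -/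
open Matrix Filter

private lemma smul_inv_real {n : Type*} [Fintype n] [DecidableEq n]
    (k : ℝ) (hk : k ≠ 0) (A : Matrix n n ℝ) : (k • A)⁻¹ = k⁻¹ • A⁻¹ := by
  by_cases h : IsUnit A.det
  · haveI := invertibleOfNonzero hk
    rw [Matrix.inv_smul (A := A) (k := k) h, invOf_eq_inv]
  · have hA : A⁻¹ = 0 := Matrix.nonsing_inv_apply_not_isUnit A h
    have hdet : ¬ IsUnit ((k • A).det) := by
      rw [Matrix.det_smul]
      simp only [isUnit_iff_ne_zero, ne_eq, not_not] at h ⊢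
      simp [h]
    rw [Matrix.nonsing_inv_apply_not_isUnit _ hdet, hA, smul_zero]

/- STATEMENT 8 (Corollary 3): with p_u = E_u/√M and p-th order Wiener prediction,
the ZF lower bound converges to log₂(1 + α² (Σ_{j=0}^p α^{2j}) τ E_u² β_k²). -/
theorem stmt_8 (p : ℕ) (α τ Eu : ℝ) (hα0 : 0 < α) (hα1 : α ≤ 1)
    (hτ : 0 < τ) (hE : 0 < Eu) (K : ℕ) (hK : 1 ≤ K)
    (β : Fin K → ℝ) (hβ : ∀ i, 0 < β i) (k : Fin K) :
    Filter.Tendsto (fun M : ℕ =>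
      let pu : ℝ := Eu / Real.sqrt M
      let c : Fin K → ℝ := fun i => α ^ 2 * (β i) ^ 2 *
        ((fun j : Fin (p + 1) => α ^ (j : ℕ)) ⬝ᵥ
          ((β i • (Matrix.of fun a b : Fin (p + 1) => α ^ ((a : ℤ) - (b : ℤ)).natAbs) +
              (Real.sqrt M / (τ * Eu)) • (1 : Matrix (Fin (p + 1)) (Fin (p + 1)) ℝ))⁻¹ *ᵥ
            (fun j : Fin (p + 1) => α ^ (j : ℕ))))
      Real.logb 2 (1 + pu * ((M : ℝ) - K) * c k /
        (pu * (∑ i, (β i - c i)) + 1)))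
      Filter.atTop
      (nhds (Real.logb 2
        (1 + α ^ 2 * (∑ j ∈ Finset.range (p + 1), α ^ (2 * j)) * τ * Eu ^ 2 * (β k) ^ 2))) := by
  have hτE : (0:ℝ) < τ * Eu := mul_pos hτ hE
  set δ : Fin (p+1) → ℝ := fun j => α ^ (j : ℕ) with hδdef
  set Δ : Matrix (Fin (p+1)) (Fin (p+1)) ℝ :=
    Matrix.of fun a b : Fin (p+1) => α ^ ((a : ℤ) - (b : ℤ)).natAbs with hΔdef
  set S : ℝ := ∑ j ∈ Finset.range (p+1), α ^ (2*j) with hSdef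
  -- dot product of δ with itself
  have hdot : δ ⬝ᵥ δ = S := by
    simp only [hδdef, hSdef, dotProduct, ← pow_add]
    rw [Fin.sum_univ_eq_sum_range (fun j => α ^ (j + j)) (p+1)]
    exact Finset.sum_congr rfl fun j _ => by rw [two_mul]
  -- the h-functions, continuous at 0
  have hg : Continuous (fun X : Matrix (Fin (p+1)) (Fin (p+1)) ℝ => δ ⬝ᵥ (X *ᵥ δ)) := by
    simp only [dotProduct, Matrix.mulVec]
    refine continuous_finset_sum _ fun j _ => continuous_const.mul ?_
    exact continuous_finset_sum _ fun l _ =>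
      (continuous_id.matrix_elem j l).mul continuous_const
  have hcont : ∀ b : ℝ,
      ContinuousAt (fun s : ℝ => δ ⬝ᵥ (((s * b) • Δ + 1)⁻¹ *ᵥ δ)) 0 := by
    intro b
    have hA : Continuous (fun s : ℝ => (s * b) • Δ + (1 : Matrix (Fin (p+1)) (Fin (p+1)) ℝ)) :=
      ((continuous_id.mul continuous_const).smul continuous_const).add continuous_const
    have hdet0 : ((0 * b : ℝ) • Δ + (1 : Matrix (Fin (p+1)) (Fin (p+1)) ℝ)).det ≠ 0 := by
      simp
    have hinv : ContinuousAt (fun s : ℝ => ((s * b) • Δ + 1)⁻¹) 0 := by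
      simp only [Matrix.inv_def, Ring.inverse_eq_inv']
      exact ((hA.matrix_det.continuousAt.inv₀ hdet0).smul
        hA.matrix_adjugate.continuousAt)
    exact hg.continuousAt.comp hinv
  have hval : ∀ b : ℝ, δ ⬝ᵥ ((((0:ℝ) * b) • Δ + 1)⁻¹ *ᵥ δ) = S := by
    intro b
    simp [hdot]
  -- sqrt tends to infinity
  have hsqrt : Tendsto (fun M : ℕ => Real.sqrt M) atTop atTop := by
    refine tendsto_atTop_atTop.2 fun b => ⟨⌈(max b 0)^2⌉₊, fun M hM => ?_⟩
    have h1 : ((max b 0)^2 : ℝ) ≤ M := le_trans (Nat.le_ceil _) (Nat.cast_le.2 hM)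
    calc b ≤ max b 0 := le_max_left _ _
      _ = Real.sqrt ((max b 0)^2) := (Real.sqrt_sq (le_max_right _ _)).symm
      _ ≤ Real.sqrt M := Real.sqrt_le_sqrt h1
  have ht0 : Tendsto (fun M : ℕ => τ * Eu / Real.sqrt M) atTop (nhds 0) :=
    tendsto_const_nhds.div_atTop hsqrt
  have hpu0 : Tendsto (fun M : ℕ => Eu / Real.sqrt M) atTop (nhds 0) :=
    tendsto_const_nhds.div_atTop hsqrt
  -- the nice form of c
  set cA : Fin K → ℕ → ℝ := fun i M => α^2 * (β i)^2 *
    ((τ * Eu / Real.sqrt M) *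
      (δ ⬝ᵥ ((((τ * Eu / Real.sqrt M) * (β i)) • Δ + 1)⁻¹ *ᵥ δ))) with hcAdef
  -- h-values tendsto S
  have hh : ∀ i : Fin K,
      Tendsto (fun M : ℕ => δ ⬝ᵥ ((((τ * Eu / Real.sqrt M) * (β i)) • Δ + 1)⁻¹ *ᵥ δ))
        atTop (nhds S) := by
    intro i
    have := ((hcont (β i)).tendsto).comp ht0
    rwa [hval (β i)] at this
  have hcA0 : ∀ i : Fin K, Tendsto (fun M : ℕ => cA i M) atTop (nhds 0) := by
    intro i
    have := (tendsto_const_nhds (x := α^2 * (β i)^2)).mul (ht0.mul (hh i))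
    simpa using this
  -- key pointwise identity
  have key : ∀ i : Fin K, ∀ M : ℕ, 1 ≤ M →
      α ^ 2 * (β i) ^ 2 * (δ ⬝ᵥ ((β i • Δ +
          (Real.sqrt M / (τ * Eu)) • (1 : Matrix (Fin (p+1)) (Fin (p+1)) ℝ))⁻¹ *ᵥ δ))
        = cA i M := by
    intro i M hM
    have hMpos : (0:ℝ) < M := by exact_mod_cast hM
    have hs : (0:ℝ) < Real.sqrt M := Real.sqrt_pos.2 hMpos
    set s : ℝ := Real.sqrt M
    have hr : s / (τ * Eu) ≠ 0 := div_ne_zero hs.ne' hτE.ne'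
    have hmat : β i • Δ + (s / (τ * Eu)) • (1 : Matrix (Fin (p+1)) (Fin (p+1)) ℝ)
        = (s / (τ * Eu)) • (((τ * Eu / s) * (β i)) • Δ + 1) := by
      rw [smul_add, smul_smul]
      have : s / (τ * Eu) * ((τ * Eu / s) * (β i)) = β i := by
        field_simp
      rw [this]
    rw [hmat, smul_inv_real _ hr, Matrix.smul_mulVec, dotProduct_smul,
      smul_eq_mul, inv_div]
  -- limit of the numerator
  set L : ℝ := α ^ 2 * S * τ * Eu ^ 2 * (β k) ^ 2 with hLdef
  have hNum : Tendsto (fun M : ℕ => (Eu / Real.sqrt M) * ((M:ℝ) - K) * cA k M)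
      atTop (nhds L) := by
    have hQ : Tendsto (fun M : ℕ => (1 - (K:ℝ)/M) *
        (α^2 * (β k)^2 * (τ * Eu^2) *
          (δ ⬝ᵥ ((((τ * Eu / Real.sqrt M) * (β k)) • Δ + 1)⁻¹ *ᵥ δ))))
        atTop (nhds ((1 - 0) * (α^2 * (β k)^2 * (τ * Eu^2) * S))) := by
      exact ((tendsto_const_nhds.sub (tendsto_const_div_atTop_nhds_zero_nat (K:ℝ))).mul
        (tendsto_const_nhds.mul (hh k)))
    have heq : ∀ᶠ M : ℕ in atTop,
        (1 - (K:ℝ)/M) * (α^2 * (β k)^2 * (τ * Eu^2) *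
          (δ ⬝ᵥ ((((τ * Eu / Real.sqrt M) * (β k)) • Δ + 1)⁻¹ *ᵥ δ)))
        = (Eu / Real.sqrt M) * ((M:ℝ) - K) * cA k M := by
      filter_upwards [eventually_ge_atTop 1] with M hM
      have hMpos : (0:ℝ) < M := by exact_mod_cast hM
      have hs : (0:ℝ) < Real.sqrt M := Real.sqrt_pos.2 hMpos
      have hss : Real.sqrt M * Real.sqrt M = (M:ℝ) := Real.mul_self_sqrt hMpos.le
      simp only [hcAdef]
      set R : ℝ := δ ⬝ᵥ ((((τ * Eu / Real.sqrt M) * (β k)) • Δ + 1)⁻¹ *ᵥ δ) with hR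
      rw [← hss]
      field_simp
      ring_nf
      rw [Real.sqrt_sq hs.le]
      ring
    have := hQ.congr' heq
    convert this using 2
    rw [hLdef]
    ring
  -- limit of the denominator
  have hDen : Tendsto (fun M : ℕ => (Eu / Real.sqrt M) * (∑ i, (β i - cA i M)) + 1)
      atTop (nhds 1) := by
    have hsum : Tendsto (fun M : ℕ => ∑ i, (β i - cA i M)) atTop
        (nhds (∑ i, (β i - 0))) :=
      tendsto_finset_sum _ fun i _ => tendsto_const_nhds.sub (hcA0 i)
    have := (hpu0.mul hsum).add (tendsto_const_nhds (x := (1:ℝ)))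
    simpa using this
  -- limit of the argument
  have hL0 : 0 < L := by
    have hS0 : 0 < S := by
      rw [hSdef]
      exact Finset.sum_pos (fun j _ => pow_pos hα0 _) ⟨0, Finset.mem_range.2 (Nat.succ_pos p)⟩
    have := mul_pos (mul_pos (mul_pos (mul_pos (pow_pos hα0 2) hS0) hτ)
      (pow_pos hE 2)) (pow_pos (hβ k) 2)
    rwa [hLdef]
  have hArg : Tendsto (fun M : ℕ => 1 + (Eu / Real.sqrt M) * ((M:ℝ) - K) * cA k M /
      ((Eu / Real.sqrt M) * (∑ i, (β i - cA i M)) + 1)) atTop (nhds (1 + L)) := by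
    have := tendsto_const_nhds (x := (1:ℝ)) |>.add (hNum.div hDen one_ne_zero)
    simpa using this
  have hfinal : Tendsto (fun M : ℕ => Real.logb 2
      (1 + (Eu / Real.sqrt M) * ((M:ℝ) - K) * cA k M /
        ((Eu / Real.sqrt M) * (∑ i, (β i - cA i M)) + 1))) atTop
      (nhds (Real.logb 2 (1 + L))) :=
    ((Real.continuousAt_logb (ne_of_gt (by linarith : (0:ℝ) < 1 + L))).tendsto).comp hArg
  refine hfinal.congr' ?_
  filter_upwards [eventually_ge_atTop 1] with M hM
  simp only []
  have hkey : ∀ i : Fin K,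
      α ^ 2 * (β i) ^ 2 * (δ ⬝ᵥ ((β i • Δ +
        (Real.sqrt M / (τ * Eu)) • (1 : Matrix (Fin (p+1)) (Fin (p+1)) ℝ))⁻¹ *ᵥ δ)) = cA i M :=
    fun i => key i M hM
  simp only [hkey]
end

section
/- Let τ > 0, E_u > 0, E_b > 0, κ > 0, α ∈ (0,1], K ≥ 1 an integer, β_1,…,β_K > 0 real, and k ∈ {1,…,K}. For each integer M ≥ 1 set p_p(M) = τ E_u/√M, p_b(M) = E_b/M^κ, and σ_i²(M) = p_p(M) β_i² / (1 + p_p(M) β_i) for i ∈ {1,…,K}, and define R^{dl}(M) = log₂(1 + α² M (σ_k²(M))² / ((β_k + 1/p_b(M)) · Σ_{i=1}^K σ_i²(M))). Then R^{dl}(M) − log₂(1 + α² τ E_u E_b β_k⁴ / (M^{κ−1/2} · Σ_{i=1}^K β_i²)) → 0 as M → ∞. -/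
open Filter Real Finset

private lemma aux_div_tendsto (a : ℝ) :
    Tendsto (fun t : ℝ => t / (t + a)) atTop (nhds 1) := by
  have h1 : Tendsto (fun t : ℝ => t + a) atTop atTop :=
    tendsto_atTop_add_const_right _ a tendsto_id
  have h2 : Tendsto (fun t : ℝ => a / (t + a)) atTop (nhds 0) :=
    Tendsto.div_atTop tendsto_const_nhds h1
  have h3 : Tendsto (fun t : ℝ => 1 - a / (t + a)) atTop (nhds 1) := by
    simpa using tendsto_const_nhds.sub h2
  refine h3.congr' ?_
  filter_upwards [h1.eventually_gt_atTop 0] with t ht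
  field_simp; ring

private lemma aux_main (x y r : ℕ → ℝ)
    (hkey : ∀ᶠ M in atTop, 0 < x M ∧ 0 < y M ∧ x M = y M * r M)
    (hr : Tendsto r atTop (nhds 1)) :
    Tendsto (fun M : ℕ => Real.logb 2 (1 + x M) - Real.logb 2 (1 + y M)) atTop (nhds 0) := by
  have hmain : Tendsto (fun M : ℕ => (1 + x M) / (1 + y M)) atTop (nhds 1) := by
    have hsub : Tendsto (fun M : ℕ => (1 + x M) / (1 + y M) - 1) atTop (nhds 0) := by
      rw [tendsto_zero_iff_norm_tendsto_zero]
      have hg : Tendsto (fun M : ℕ => |r M - 1|) atTop (nhds 0) := by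
        have := hr.sub_const 1
        rw [sub_self] at this
        simpa using this.abs
      refine squeeze_zero' (Eventually.of_forall fun M => norm_nonneg _) ?_ hg
      filter_upwards [hkey] with M hM
      obtain ⟨hx0, hy0, hxyr⟩ := hM
      have h1y : (0:ℝ) < 1 + y M := by linarith
      have heq : (1 + x M) / (1 + y M) - 1 = (y M / (1 + y M)) * (r M - 1) := by
        rw [hxyr]; field_simp; ring
      rw [Real.norm_eq_abs, heq, abs_mul]
      have hb : |y M / (1 + y M)| ≤ 1 := by
        rw [abs_of_nonneg (by positivity), div_le_one h1y]; linarith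
      calc |y M / (1 + y M)| * |r M - 1| ≤ 1 * |r M - 1| :=
            mul_le_mul_of_nonneg_right hb (abs_nonneg _)
        _ = |r M - 1| := one_mul _
    have := hsub.add (tendsto_const_nhds (x := (1:ℝ)))
    simpa using this
  have hlog : Tendsto (fun M : ℕ => Real.logb 2 ((1 + x M) / (1 + y M))) atTop (nhds 0) := by
    have hcont : ContinuousAt (Real.logb 2) 1 := Real.continuousAt_logb one_ne_zero
    have := hcont.tendsto.comp hmain
    simpa [Function.comp_def] using this
  refine hlog.congr' ?_
  filter_upwards [hkey] with M hM
  obtain ⟨hx0, hy0, _⟩ := hM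
  have h1x : (0:ℝ) < 1 + x M := by linarith
  have h1y : (0:ℝ) < 1 + y M := by linarith
  rw [Real.logb_div h1x.ne' h1y.ne']

/- STATEMENT 9 (downlink power scaling law): with p_p = τE_u/√M and p_b = E_b/M^κ,
R^{dl}(M) − log₂(1 + α² τ E_u E_b β_k⁴ / (M^{κ−1/2} Σ_i β_i²)) → 0. -/
set_option maxHeartbeats 1000000 in
theorem stmt_9 (τ Eu Eb κ α : ℝ) (hτ : 0 < τ) (hEu : 0 < Eu) (hEb : 0 < Eb)
    (hκ : 0 < κ) (hα0 : 0 < α) (hα1 : α ≤ 1) (K : ℕ) (hK : 1 ≤ K)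
    (β : Fin K → ℝ) (hβ : ∀ i, 0 < β i) (k : Fin K) :
    Filter.Tendsto (fun M : ℕ =>
      let pp : ℝ := τ * Eu / Real.sqrt M
      let pb : ℝ := Eb / (M : ℝ) ^ κ
      let σ2 : Fin K → ℝ := fun i => pp * (β i) ^ 2 / (1 + pp * β i)
      Real.logb 2 (1 + α ^ 2 * (M : ℝ) * (σ2 k) ^ 2 / ((β k + 1 / pb) * ∑ i, σ2 i)) -
        Real.logb 2 (1 + α ^ 2 * τ * Eu * Eb * (β k) ^ 4 /
          ((M : ℝ) ^ (κ - 1 / 2) * ∑ i, (β i) ^ 2)))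
      Filter.atTop (nhds 0) := by
  have hc : (0:ℝ) < τ * Eu := mul_pos hτ hEu
  have hS : (0:ℝ) < ∑ i, (β i) ^ 2 :=
    Finset.sum_pos (fun i _ => pow_pos (hβ i) 2) ⟨k, Finset.mem_univ k⟩
  have hs_top : Tendsto (fun M : ℕ => Real.sqrt M) atTop atTop := by
    have h12 : (0:ℝ) < 1 / 2 := by norm_num
    have := (tendsto_rpow_atTop h12).comp tendsto_natCast_atTop_atTop
    refine this.congr fun M => ?_
    simp [Real.sqrt_eq_rpow, Function.comp]
  refine aux_main
    (fun M : ℕ => α ^ 2 * (M : ℝ) *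
        ((τ * Eu / Real.sqrt M) * (β k) ^ 2 / (1 + (τ * Eu / Real.sqrt M) * β k)) ^ 2 /
        ((β k + 1 / (Eb / (M : ℝ) ^ κ)) *
          ∑ i, (τ * Eu / Real.sqrt M) * (β i) ^ 2 / (1 + (τ * Eu / Real.sqrt M) * β i)))
    (fun M : ℕ => α ^ 2 * τ * Eu * Eb * (β k) ^ 4 /
        ((M : ℝ) ^ (κ - 1 / 2) * ∑ i, (β i) ^ 2))
    (fun M : ℕ => ((M : ℝ) / (Real.sqrt M + τ * Eu * β k) ^ 2) *
        ((M : ℝ) ^ κ / (Eb * β k + (M : ℝ) ^ κ)) *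
        ((∑ i, (β i) ^ 2) / (Real.sqrt M * ∑ i, (β i) ^ 2 / (Real.sqrt M + τ * Eu * β i))))
    ?_ ?_
  · -- key eventual facts
    filter_upwards [eventually_ge_atTop 1] with M hM
    have hM0 : (0:ℝ) < (M : ℝ) := by exact_mod_cast hM
    set s1 : ℝ := Real.sqrt M with hs1_def
    have hsM : 0 < s1 := Real.sqrt_pos.2 hM0
    have hs2 : s1 ^ 2 = (M : ℝ) := Real.sq_sqrt hM0.le
    have hP : (0:ℝ) < (M : ℝ) ^ κ := Real.rpow_pos_of_pos hM0 _
    have hPow : (M : ℝ) ^ (κ - 1 / 2) = (M : ℝ) ^ κ / s1 := by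
      rw [Real.rpow_sub hM0]
      congr 1
      exact (Real.sqrt_eq_rpow _).symm
    have hppos : 0 < τ * Eu / s1 := div_pos hc hsM
    have hσpos : ∀ i : Fin K,
        0 < (τ * Eu / s1) * (β i) ^ 2 / (1 + (τ * Eu / s1) * β i) := by
      intro i
      have h2 : 0 < 1 + (τ * Eu / s1) * β i := by
        have := mul_pos hppos (hβ i); linarith
      exact div_pos (mul_pos hppos (pow_pos (hβ i) 2)) h2
    have hsumpos :
        0 < ∑ i, (τ * Eu / s1) * (β i) ^ 2 / (1 + (τ * Eu / s1) * β i) :=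
      Finset.sum_pos (fun i _ => hσpos i) ⟨k, Finset.mem_univ k⟩
    have hden2 : 0 < β k + 1 / (Eb / (M : ℝ) ^ κ) := by
      have h1 : 0 < 1 / (Eb / (M : ℝ) ^ κ) := one_div_pos.2 (div_pos hEb hP)
      have := hβ k; linarith
    refine ⟨?_, ?_, ?_⟩
    · exact div_pos (mul_pos (mul_pos (pow_pos hα0 2) hM0) (pow_pos (hσpos k) 2))
        (mul_pos hden2 hsumpos)
    · have h1 : (0:ℝ) < (M : ℝ) ^ (κ - 1 / 2) := Real.rpow_pos_of_pos hM0 _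
      exact div_pos (by have := hβ k; positivity) (mul_pos h1 hS)
    · -- the algebraic identity  x = y * r
      have hσ : ∀ i : Fin K,
          (τ * Eu / s1) * (β i) ^ 2 / (1 + (τ * Eu / s1) * β i)
            = τ * Eu * (β i) ^ 2 / (s1 + τ * Eu * β i) := by
        intro i
        have h1 : (0:ℝ) < s1 + τ * Eu * β i := by
          have := mul_pos hc (hβ i); linarith
        have h2 : 0 < 1 + (τ * Eu / s1) * β i := by
          have := mul_pos hppos (hβ i); linarith
        field_simp
      have hsum : (∑ i, (τ * Eu / s1) * (β i) ^ 2 / (1 + (τ * Eu / s1) * β i))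
          = τ * Eu * ∑ i, (β i) ^ 2 / (s1 + τ * Eu * β i) := by
        rw [Finset.mul_sum]
        exact Finset.sum_congr rfl fun i _ => by rw [hσ i, mul_div_assoc]
      have hT : 0 < ∑ i, (β i) ^ 2 / (s1 + τ * Eu * β i) :=
        Finset.sum_pos (fun i _ => by
          have h1 : (0:ℝ) < s1 + τ * Eu * β i := by
            have := mul_pos hc (hβ i); linarith
          exact div_pos (pow_pos (hβ i) 2) h1) ⟨k, Finset.mem_univ k⟩
      simp only [hσ k, hsum, hPow]
      obtain ⟨P, hP1, hPdef⟩ : ∃ P : ℝ, 0 < P ∧ (M : ℝ) ^ κ = P := ⟨_, hP, rfl⟩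
      obtain ⟨T, hT1, hTdef⟩ : ∃ T : ℝ, 0 < T ∧
          (∑ i, (β i) ^ 2 / (s1 + τ * Eu * β i)) = T := ⟨_, hT, rfl⟩
      obtain ⟨S, hS1, hSdef⟩ : ∃ S : ℝ, 0 < S ∧ (∑ i, (β i) ^ 2) = S := ⟨_, hS, rfl⟩
      rw [hPdef, hTdef, hSdef, ← hs2]
      have h1 : (0:ℝ) < s1 + τ * Eu * β k := by
        have := mul_pos hc (hβ k); linarith
      have h2 : (0:ℝ) < Eb * β k + P := by
        have := mul_pos hEb (hβ k); linarith
      have h4 : (0:ℝ) < β k + 1 / (Eb / P) := by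
        have h5 : 0 < 1 / (Eb / P) := one_div_pos.2 (div_pos hEb hP1)
        have := hβ k; linarith
      have e1 : (s1 + τ * Eu * β k) ≠ 0 := h1.ne'
      have e2 : (Eb * β k + P) ≠ 0 := h2.ne'
      have e3 : T ≠ 0 := hT1.ne'
      have e4 : (β k + 1 / (Eb / P)) ≠ 0 := h4.ne'
      have e5 : s1 ≠ 0 := hsM.ne'
      have e6 : P ≠ 0 := hP1.ne'
      have e7 : Eb ≠ 0 := hEb.ne'
      have e8 : S ≠ 0 := hS1.ne'
      trans (α ^ 2 * s1 ^ 2 * (τ * Eu) * Eb * β k ^ 4 /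
          ((s1 + τ * Eu * β k) ^ 2 * ((Eb * β k + P) * T)))
      · rw [one_div_div]
        have h4' : (0:ℝ) < β k + P / Eb := by
          have := hβ k; positivity
        have e4' : β k + P / Eb ≠ 0 := h4'.ne'
        rw [div_pow, div_eq_div_iff (by positivity) (by positivity)]
        field_simp
      · simp only [div_mul_div_comm]
        rw [div_eq_div_iff (by positivity) (by positivity)]
        field_simp
  · -- limit of r
    have hf1 : Tendsto (fun M : ℕ => (M : ℝ) / (Real.sqrt M + τ * Eu * β k) ^ 2)
        atTop (nhds 1) := by
      have h := (aux_div_tendsto (τ * Eu * β k)).comp hs_top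
      have h2 : Tendsto
          (fun M : ℕ => (Real.sqrt M / (Real.sqrt M + τ * Eu * β k)) ^ 2)
          atTop (nhds 1) := by
        simpa using h.pow 2
      refine h2.congr fun M => ?_
      rw [div_pow, Real.sq_sqrt (Nat.cast_nonneg M)]
    have hP_top : Tendsto (fun M : ℕ => (M : ℝ) ^ κ) atTop atTop :=
      (tendsto_rpow_atTop hκ).comp tendsto_natCast_atTop_atTop
    have hf2 : Tendsto (fun M : ℕ => (M : ℝ) ^ κ / (Eb * β k + (M : ℝ) ^ κ))
        atTop (nhds 1) := by
      have h := (aux_div_tendsto (Eb * β k)).comp hP_top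
      refine h.congr fun M => ?_
      simp [Function.comp, add_comm]
    have hD : Tendsto
        (fun M : ℕ => Real.sqrt M * ∑ i, (β i) ^ 2 / (Real.sqrt M + τ * Eu * β i))
        atTop (nhds (∑ i, (β i) ^ 2)) := by
      have h2 : Tendsto
          (fun M : ℕ => ∑ i, (β i) ^ 2 * (Real.sqrt M / (Real.sqrt M + τ * Eu * β i)))
          atTop (nhds (∑ i, (β i) ^ 2)) := by
        have h3 : ∀ i : Fin K, Tendsto
            (fun M : ℕ => (β i) ^ 2 * (Real.sqrt M / (Real.sqrt M + τ * Eu * β i)))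
            atTop (nhds ((β i) ^ 2)) := by
          intro i
          have := (tendsto_const_nhds (x := (β i) ^ 2)).mul
            ((aux_div_tendsto (τ * Eu * β i)).comp hs_top)
          simpa [Function.comp_def] using this
        exact tendsto_finset_sum _ fun i _ => h3 i
      refine h2.congr fun M => ?_
      rw [Finset.mul_sum]
      exact Finset.sum_congr rfl fun i _ => by ring
    have hf3 : Tendsto
        (fun M : ℕ => (∑ i, (β i) ^ 2) /
          (Real.sqrt M * ∑ i, (β i) ^ 2 / (Real.sqrt M + τ * Eu * β i)))
        atTop (nhds 1) := by
      have := (tendsto_const_nhds (x := ∑ i, (β i) ^ 2)).div hD hS.ne'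
      simpa [div_self hS.ne', Pi.div_def] using this
    have := (hf1.mul hf2).mul hf3
    simpa using this
end

section
/- Let C ≥ 2 and K ≥ 1 be integers, b ∈ {1,…,C}, k ∈ {1,…,K}, and let β_{bci} > 0 for all c ∈ {1,…,C}, i ∈ {1,…,K}; let α ∈ (0,1], τ > 0, E_u > 0, and 0 < γ < 1/2. For each integer M ≥ 1 define Q_a(M) = log₂(1 + α² τ E_u² β_{bbk}² M^{1−2γ} / (β_{bbk} E_u M^{−γ} + 1 + (Σ_{(c,i)≠(b,k)} β_{bci}) E_u M^{−γ} + α² τ E_u² (Σ_{c≠b} β_{bck}²) M^{1−2γ})). Then Q_a(M) → log₂(1 + β_{bbk}² / Σ_{c≠b} β_{bck}²) as M → ∞. -/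
open Filter Real

/- STATEMENT 11 (Proposition 1, 0 < γ < 1/2): the multi-cell aged-CSI rate converges to
log₂(1 + β_{bbk}² / Σ_{c≠b} β_{bck}²). -/
theorem stmt_11 (C K : ℕ) (hC : 2 ≤ C) (hK : 1 ≤ K) (b : Fin C) (k : Fin K)
    (β : Fin C → Fin K → ℝ) (hβ : ∀ c i, 0 < β c i)
    (α τ Eu γ : ℝ) (hα0 : 0 < α) (hα1 : α ≤ 1) (hτ : 0 < τ) (hE : 0 < Eu)
    (hγ0 : 0 < γ) (hγ1 : γ < 1 / 2) :
    Filter.Tendsto (fun M : ℕ =>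
      Real.logb 2 (1 + α ^ 2 * τ * Eu ^ 2 * (β b k) ^ 2 * (M : ℝ) ^ (1 - 2 * γ) /
        (β b k * Eu * (M : ℝ) ^ (-γ) + 1 +
          (∑ q ∈ Finset.univ.erase (b, k), β q.1 q.2) * Eu * (M : ℝ) ^ (-γ) +
          α ^ 2 * τ * Eu ^ 2 * (∑ c ∈ Finset.univ.erase b, (β c k) ^ 2) *
            (M : ℝ) ^ (1 - 2 * γ))))
      Filter.atTop
      (nhds (Real.logb 2 (1 + (β b k) ^ 2 / ∑ c ∈ Finset.univ.erase b, (β c k) ^ 2))) := by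
  set A := α ^ 2 * τ * Eu ^ 2 with hA
  have hApos : 0 < A := by positivity
  set S2 := ∑ c ∈ Finset.univ.erase b, (β c k) ^ 2 with hS2
  have hS2pos : 0 < S2 := by
    apply Finset.sum_pos
    · intro i _; exact pow_pos (hβ i k) 2
    · rw [← Finset.card_pos, Finset.card_erase_of_mem (Finset.mem_univ b),
        Finset.card_univ, Fintype.card_fin]
      omega
  set c1 := β b k * Eu with hc1
  set c2 := (∑ q ∈ Finset.univ.erase (b, k), β q.1 q.2) * Eu with hc2
  set g : ℕ → ℝ := fun M =>
    c1 * (M : ℝ) ^ (γ - 1) + (M : ℝ) ^ (2 * γ - 1) + c2 * (M : ℝ) ^ (γ - 1) + A * S2 with hg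
  have hglim : Tendsto g atTop (nhds (A * S2)) := by
    have h1 : Tendsto (fun M : ℕ => (M : ℝ) ^ (γ - 1)) atTop (nhds 0) := by
      have := (tendsto_rpow_neg_atTop (y := 1 - γ) (by linarith)).comp
        tendsto_natCast_atTop_atTop
      simpa [Function.comp_def, neg_sub] using this
    have h2 : Tendsto (fun M : ℕ => (M : ℝ) ^ (2 * γ - 1)) atTop (nhds 0) := by
      have := (tendsto_rpow_neg_atTop (y := 1 - 2 * γ) (by linarith)).comp
        tendsto_natCast_atTop_atTop
      simpa [Function.comp_def, neg_sub] using this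
    have : Tendsto g atTop (nhds (c1 * 0 + 0 + c2 * 0 + A * S2)) := by
      exact (((h1.const_mul c1).add h2).add (h1.const_mul c2)).add tendsto_const_nhds
    simpa using this
  have hinner : Tendsto (fun M : ℕ => A * (β b k) ^ 2 * (M : ℝ) ^ (1 - 2 * γ) /
      (c1 * (M : ℝ) ^ (-γ) + 1 + c2 * (M : ℝ) ^ (-γ) + A * S2 * (M : ℝ) ^ (1 - 2 * γ)))
      atTop (nhds ((β b k) ^ 2 / S2)) := by
    have heq : ∀ᶠ M : ℕ in atTop, A * (β b k) ^ 2 * (M : ℝ) ^ (1 - 2 * γ) /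
        (c1 * (M : ℝ) ^ (-γ) + 1 + c2 * (M : ℝ) ^ (-γ) + A * S2 * (M : ℝ) ^ (1 - 2 * γ))
        = A * (β b k) ^ 2 / g M := by
      filter_upwards [eventually_ge_atTop 1] with M hM
      have hMpos : (0 : ℝ) < (M : ℝ) := by exact_mod_cast hM
      have hpow : ((M : ℝ) ^ (1 - 2 * γ)) ≠ 0 := (rpow_pos_of_pos hMpos _).ne'
      have hD : c1 * (M : ℝ) ^ (-γ) + 1 + c2 * (M : ℝ) ^ (-γ) + A * S2 * (M : ℝ) ^ (1 - 2 * γ)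
          = g M * (M : ℝ) ^ (1 - 2 * γ) := by
        have e1 : (M : ℝ) ^ (γ - 1) * (M : ℝ) ^ (1 - 2 * γ) = (M : ℝ) ^ (-γ) := by
          rw [← Real.rpow_add hMpos]; congr 1; ring
        have e2 : (M : ℝ) ^ (2 * γ - 1) * (M : ℝ) ^ (1 - 2 * γ) = 1 := by
          rw [← Real.rpow_add hMpos, show 2 * γ - 1 + (1 - 2 * γ) = 0 by ring, Real.rpow_zero]
        simp only [hg]
        linear_combination (-c1 - c2) * e1 - e2
      rw [hD, mul_comm (g M) _, ← div_div, mul_div_assoc, div_self hpow, mul_one]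
    have hgne : A * S2 ≠ 0 := (mul_pos hApos hS2pos).ne'
    have : Tendsto (fun M : ℕ => A * (β b k) ^ 2 / g M) atTop
        (nhds (A * (β b k) ^ 2 / (A * S2))) := tendsto_const_nhds.div hglim hgne
    have hval : A * (β b k) ^ 2 / (A * S2) = (β b k) ^ 2 / S2 := by
      field_simp
    rw [← hval]
    exact this.congr' (by filter_upwards [heq] with M h using h.symm)
  have hpos : (0 : ℝ) < 1 + (β b k) ^ 2 / S2 := by positivity
  have hcont : ContinuousAt (fun x : ℝ => Real.logb 2 (1 + x)) ((β b k) ^ 2 / S2) := by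
    exact (Real.continuousAt_logb hpos.ne').comp (by fun_prop)
  exact hcont.tendsto.comp hinner
end

section
/- Let C ≥ 2 and K ≥ 1 be integers, b ∈ {1,…,C}, k ∈ {1,…,K}, and let β_{bci} > 0 for all c ∈ {1,…,C}, i ∈ {1,…,K}; let p ∈ ℕ, α ∈ (0,1], τ > 0, E_u > 0, 0 < γ < 1/2, and set s = Σ_{j=0}^p α^{2j}. For each integer M ≥ 1 define Q_p(M) = log₂(1 + α² s τ E_u² β_{bbk}² M^{1−2γ} / (β_{bbk} E_u M^{−γ} + 1 + (Σ_{(c,i)≠(b,k)} β_{bci}) E_u M^{−γ} + α² s α^{2p} τ E_u² (Σ_{c≠b} β_{bck}²) M^{1−2γ})). Then Q_p(M) → log₂(1 + β_{bbk}² / (α^{2p} · Σ_{c≠b} β_{bck}²)) as M → ∞. -/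
/- STATEMENT 14 (Proposition 2, 0 < γ < 1/2): the multi-cell predicted-CSI rate converges
to log₂(1 + β_{bbk}² / (α^{2p} Σ_{c≠b} β_{bck}²)). -/
theorem stmt_14 (C K : ℕ) (hC : 2 ≤ C) (hK : 1 ≤ K) (b : Fin C) (k : Fin K)
    (β : Fin C → Fin K → ℝ) (hβ : ∀ c i, 0 < β c i)
    (p : ℕ) (α τ Eu γ : ℝ) (hα0 : 0 < α) (hα1 : α ≤ 1) (hτ : 0 < τ) (hE : 0 < Eu)
    (hγ0 : 0 < γ) (hγ1 : γ < 1 / 2)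
    (s : ℝ) (hs : s = ∑ j ∈ Finset.range (p + 1), α ^ (2 * j)) :
    Filter.Tendsto (fun M : ℕ =>
      Real.logb 2 (1 + α ^ 2 * s * τ * Eu ^ 2 * (β b k) ^ 2 * (M : ℝ) ^ (1 - 2 * γ) /
        (β b k * Eu * (M : ℝ) ^ (-γ) + 1 +
          (∑ q ∈ Finset.univ.erase (b, k), β q.1 q.2) * Eu * (M : ℝ) ^ (-γ) +
          α ^ 2 * s * α ^ (2 * p) * τ * Eu ^ 2 *
            (∑ c ∈ Finset.univ.erase b, (β c k) ^ 2) * (M : ℝ) ^ (1 - 2 * γ))))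
      Filter.atTop
      (nhds (Real.logb 2 (1 + (β b k) ^ 2 /
        (α ^ (2 * p) * ∑ c ∈ Finset.univ.erase b, (β c k) ^ 2)))) := by
  have hs0 : 0 < s := by
    rw [hs]
    apply Finset.sum_pos
    · intro j _; positivity
    · exact ⟨0, Finset.mem_range.mpr (Nat.succ_pos p)⟩
  obtain ⟨c0, hc0⟩ : ∃ c : Fin C, c ≠ b :=
    Fintype.exists_ne_of_one_lt_card (by rw [Fintype.card_fin]; omega) b
  set S2 := ∑ c ∈ Finset.univ.erase b, (β c k) ^ 2 with hS2
  have hS : 0 < S2 := by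
    apply Finset.sum_pos
    · intro c _; have := hβ c k; positivity
    · exact ⟨c0, Finset.mem_erase.mpr ⟨hc0, Finset.mem_univ _⟩⟩
  set c1 := β b k * Eu with hc1
  set c2 := (∑ q ∈ Finset.univ.erase (b, k), β q.1 q.2) * Eu with hc2def
  set A := α ^ 2 * s * τ * Eu ^ 2 * (β b k) ^ 2 with hA
  set B := α ^ 2 * s * α ^ (2 * p) * τ * Eu ^ 2 * S2 with hB
  have hBpos : 0 < B := by
    rw [hB]
    have h1 : (0:ℝ) < α ^ 2 := by positivity
    have h2 : (0:ℝ) < α ^ (2 * p) := by positivity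
    exact mul_pos (mul_pos (mul_pos (mul_pos (mul_pos h1 hs0) h2) hτ) (by positivity)) hS
  have hApos : 0 < A := by
    rw [hA]
    have h1 : (0:ℝ) < α ^ 2 := by positivity
    have := hβ b k
    exact mul_pos (mul_pos (mul_pos (mul_pos h1 hs0) hτ) (by positivity)) (by positivity)
  -- limits of rpow
  have hy : Filter.Tendsto (fun M : ℕ => (M : ℝ) ^ (γ - 1)) Filter.atTop (nhds 0) := by
    have h := (tendsto_rpow_neg_atTop (show (0:ℝ) < 1 - γ by linarith)).comp
      tendsto_natCast_atTop_atTop (α := ℕ)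
    have he : γ - 1 = -(1 - γ) := by ring
    rw [he]; exact h
  have hz : Filter.Tendsto (fun M : ℕ => (M : ℝ) ^ (2 * γ - 1)) Filter.atTop (nhds 0) := by
    have h := (tendsto_rpow_neg_atTop (show (0:ℝ) < 1 - 2 * γ by linarith)).comp
      tendsto_natCast_atTop_atTop (α := ℕ)
    have he : 2 * γ - 1 = -(1 - 2 * γ) := by ring
    rw [he]; exact h
  have hden : Filter.Tendsto
      (fun M : ℕ => c1 * (M : ℝ) ^ (γ - 1) + (M : ℝ) ^ (2 * γ - 1)
        + c2 * (M : ℝ) ^ (γ - 1) + B) Filter.atTop (nhds B) := by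
    have := (((hy.const_mul c1).add hz).add (hy.const_mul c2)).add
      (tendsto_const_nhds (x := B) (f := Filter.atTop (α := ℕ)))
    simpa using this
  have hg : Filter.Tendsto
      (fun M : ℕ => A / (c1 * (M : ℝ) ^ (γ - 1) + (M : ℝ) ^ (2 * γ - 1)
        + c2 * (M : ℝ) ^ (γ - 1) + B)) Filter.atTop (nhds (A / B)) :=
    tendsto_const_nhds.div hden hBpos.ne'
  have hlim : Filter.Tendsto
      (fun M : ℕ => A * (M : ℝ) ^ (1 - 2 * γ) /
        (c1 * (M : ℝ) ^ (-γ) + 1 + c2 * (M : ℝ) ^ (-γ) + B * (M : ℝ) ^ (1 - 2 * γ)))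
      Filter.atTop (nhds (A / B)) := by
    apply hg.congr'
    filter_upwards [Filter.eventually_ge_atTop 1] with M hM
    have hx : (0:ℝ) < (M : ℝ) := by exact_mod_cast Nat.lt_of_lt_of_le Nat.zero_lt_one hM
    have e1 : (M:ℝ) ^ (-γ) = (M:ℝ) ^ (γ - 1) * (M:ℝ) ^ (1 - 2 * γ) := by
      rw [← Real.rpow_add hx]; congr 1; ring
    have e2 : (M:ℝ) ^ (2 * γ - 1) * (M:ℝ) ^ (1 - 2 * γ) = 1 := by
      rw [← Real.rpow_add hx, show 2 * γ - 1 + (1 - 2 * γ) = 0 by ring, Real.rpow_zero]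
    have eden : c1 * (M:ℝ) ^ (-γ) + 1 + c2 * (M:ℝ) ^ (-γ) + B * (M:ℝ) ^ (1 - 2 * γ)
        = (c1 * (M:ℝ) ^ (γ - 1) + (M:ℝ) ^ (2 * γ - 1) + c2 * (M:ℝ) ^ (γ - 1) + B)
          * (M:ℝ) ^ (1 - 2 * γ) := by
      rw [e1]; linear_combination -e2
    rw [eden, mul_div_mul_right _ _ (ne_of_gt (Real.rpow_pos_of_pos hx _))]
  have hABeq : A / B = (β b k) ^ 2 / (α ^ (2 * p) * S2) := by
    rw [hA, hB]
    rw [div_eq_div_iff (by positivity) (by positivity)]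
    ring
  have hL : 0 < 1 + A / B := by positivity
  rw [← hABeq]
  simp only [Real.logb]
  exact ((Real.continuousAt_log hL.ne').tendsto.comp
    (tendsto_const_nhds.add hlim)).div_const _
end

section
/- Let C ≥ 1 and K ≥ 1 be integers, b ∈ {1,…,C}, k ∈ {1,…,K}, and let β_{bci} > 0 for all c ∈ {1,…,C}, i ∈ {1,…,K}; let p ∈ ℕ, α ∈ (0,1], τ > 0, E_u > 0, γ > 1/2, and set s = Σ_{j=0}^p α^{2j}. For each integer M ≥ 1 define Q_p(M) = log₂(1 + α² s τ E_u² β_{bbk}² M^{1−2γ} / (β_{bbk} E_u M^{−γ} + 1 + (Σ_{(c,i)≠(b,k)} β_{bci}) E_u M^{−γ} + α² s α^{2p} τ E_u² (Σ_{c≠b} β_{bck}²) M^{1−2γ})). Then Q_p(M) → 0 as M → ∞. -/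
/- STATEMENT 15 (Proposition 2, γ > 1/2): the multi-cell predicted-CSI rate converges to 0. -/
theorem stmt_15 (C K : ℕ) (hC : 1 ≤ C) (hK : 1 ≤ K) (b : Fin C) (k : Fin K)
    (β : Fin C → Fin K → ℝ) (hβ : ∀ c i, 0 < β c i)
    (p : ℕ) (α τ Eu γ : ℝ) (hα0 : 0 < α) (hα1 : α ≤ 1) (hτ : 0 < τ) (hE : 0 < Eu)
    (hγ : 1 / 2 < γ) (s : ℝ) (hs : s = ∑ j ∈ Finset.range (p + 1), α ^ (2 * j)) :
    Filter.Tendsto (fun M : ℕ =>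
      Real.logb 2 (1 + α ^ 2 * s * τ * Eu ^ 2 * (β b k) ^ 2 * (M : ℝ) ^ (1 - 2 * γ) /
        (β b k * Eu * (M : ℝ) ^ (-γ) + 1 +
          (∑ q ∈ Finset.univ.erase (b, k), β q.1 q.2) * Eu * (M : ℝ) ^ (-γ) +
          α ^ 2 * s * α ^ (2 * p) * τ * Eu ^ 2 *
            (∑ c ∈ Finset.univ.erase b, (β c k) ^ 2) * (M : ℝ) ^ (1 - 2 * γ))))
      Filter.atTop (nhds 0) := by
  have hs0 : 0 < s := by
    rw [hs]
    apply Finset.sum_pos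
    · intro j _; positivity
    · exact ⟨0, Finset.mem_range.mpr (Nat.succ_pos p)⟩
  set c := α ^ 2 * s * τ * Eu ^ 2 * (β b k) ^ 2 with hc
  have hc0 : 0 ≤ c := by positivity
  set f : ℕ → ℝ := fun M =>
    c * (M : ℝ) ^ (1 - 2 * γ) /
      (β b k * Eu * (M : ℝ) ^ (-γ) + 1 +
        (∑ q ∈ Finset.univ.erase (b, k), β q.1 q.2) * Eu * (M : ℝ) ^ (-γ) +
        α ^ 2 * s * α ^ (2 * p) * τ * Eu ^ 2 *
          (∑ c ∈ Finset.univ.erase b, (β c k) ^ 2) * (M : ℝ) ^ (1 - 2 * γ)) with hf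
  have hD : ∀ M : ℕ, (1 : ℝ) ≤
      β b k * Eu * (M : ℝ) ^ (-γ) + 1 +
        (∑ q ∈ Finset.univ.erase (b, k), β q.1 q.2) * Eu * (M : ℝ) ^ (-γ) +
        α ^ 2 * s * α ^ (2 * p) * τ * Eu ^ 2 *
          (∑ c ∈ Finset.univ.erase b, (β c k) ^ 2) * (M : ℝ) ^ (1 - 2 * γ) := by
    intro M
    have h1 : (0:ℝ) ≤ (M : ℝ) ^ (-γ) := Real.rpow_nonneg (Nat.cast_nonneg M) _
    have h2 : (0:ℝ) ≤ (M : ℝ) ^ (1 - 2 * γ) := Real.rpow_nonneg (Nat.cast_nonneg M) _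
    have h3 : (0:ℝ) ≤ ∑ q ∈ Finset.univ.erase (b, k), β q.1 q.2 :=
      Finset.sum_nonneg fun q _ => (hβ q.1 q.2).le
    have h4 : (0:ℝ) ≤ ∑ c ∈ Finset.univ.erase b, (β c k) ^ 2 :=
      Finset.sum_nonneg fun q _ => sq_nonneg _
    have hb : (0:ℝ) < β b k := hβ b k
    nlinarith [mul_nonneg (mul_nonneg hb.le hE.le) h1,
      mul_nonneg (mul_nonneg h3 hE.le) h1,
      mul_nonneg (mul_nonneg (by positivity :
        (0:ℝ) ≤ α ^ 2 * s * α ^ (2 * p) * τ * Eu ^ 2) h4) h2]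
  have hN : ∀ M : ℕ, (0:ℝ) ≤ c * (M : ℝ) ^ (1 - 2 * γ) := fun M =>
    mul_nonneg hc0 (Real.rpow_nonneg (Nat.cast_nonneg M) _)
  have hg : Filter.Tendsto (fun M : ℕ => c * (M : ℝ) ^ (1 - 2 * γ))
      Filter.atTop (nhds 0) := by
    have h := (tendsto_rpow_neg_atTop (by linarith : (0:ℝ) < 2 * γ - 1)).comp
      tendsto_natCast_atTop_atTop (α := ℕ)
    have he : (1 - 2 * γ) = -(2 * γ - 1) := by ring
    have h' : Filter.Tendsto (fun M : ℕ => (M : ℝ) ^ (1 - 2 * γ))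
        Filter.atTop (nhds 0) := by
      rw [he]; exact h
    simpa using h'.const_mul c
  have hf0 : Filter.Tendsto f Filter.atTop (nhds 0) := by
    apply tendsto_of_tendsto_of_tendsto_of_le_of_le tendsto_const_nhds hg
    · intro M
      exact div_nonneg (hN M) (le_trans zero_le_one (hD M))
    · intro M
      exact div_le_self (hN M) (hD M)
  have h1f : Filter.Tendsto (fun M => 1 + f M) Filter.atTop (nhds 1) := by
    simpa using tendsto_const_nhds.add hf0
  have hlog : Filter.Tendsto (fun M => Real.logb 2 (1 + f M)) Filter.atTop (nhds 0) := by
    simp only [Real.logb]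
    have := ((Real.continuousAt_log one_ne_zero).tendsto.comp h1f).div_const (Real.log 2)
    simpa using this
  exact hlog
end
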